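/- Define F : ℝ² ∖ (ℝ × {±2}) → ℝ² by F(α, β) = (2α²/(4 − β²), β + α²β/(4 − β²)), and for natural numbers n and integers j define the curve γ_{n,j} = {(α, β) ∈ ℝ² : 4 − β² + α² − 4α·cos(2πj/2ⁿ) = 0}. Then for all n ≥ 1 and all j, if (α, β) ∈ γ_{n,j} and β ≠ ±2, then F(α, β) ∈ γ_{n−1,j}. -/

import Mathlib

theorem stmt8 (n : ℕ) (hn : 1 ≤ n) (j : ℤ) (α β : ℝ)
    (hβ2 : β ≠ 2) (hβ2' : β ≠ -2)
    (hγ : 4 - β ^ 2 + α ^ 2 - 4 * α * Real.cos (2 * Real.pi * j / 2 ^ n) = 0) :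
    4 - (β + α ^ 2 * β / (4 - β ^ 2)) ^ 2 + (2 * α ^ 2 / (4 - β ^ 2)) ^ 2 -
      4 * (2 * α ^ 2 / (4 - β ^ 2)) * Real.cos (2 * Real.pi * j / 2 ^ (n - 1)) = 0 := by
  have hd : (4 : ℝ) - β ^ 2 ≠ 0 := by
    intro h
    have : (β - 2) * (β + 2) = 0 := by ring_nf; nlinarith
    rcases mul_eq_zero.mp this with h' | h'
    · exact hβ2 (by linarith)
    · exact hβ2' (by linarith)
  have h2n : (2 : ℝ) ^ n = 2 * 2 ^ (n - 1) := by
    conv_lhs => rw [show n = (n - 1) + 1 from (Nat.succ_pred_eq_of_pos hn).symm]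
    ring
  have hex : 2 * Real.pi * j / 2 ^ (n - 1) = 2 * (2 * Real.pi * j / 2 ^ n) := by
    rw [h2n]
    field_simp
  rw [hex, Real.cos_two_mul]
  set c := Real.cos (2 * Real.pi * (j : ℝ) / 2 ^ n) with hc
  field_simp
  linear_combination ((4 - β ^ 2) * (4 * α * c + 4 - β ^ 2 + α ^ 2)) * hγ
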